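/- For the inverse cKdV recursion operator with (R^{-1})_- = K_{-1} ∂^{-1} γ_{-1}^T, the nonlocal part of B_{-s} = R^{-s}B₀ for s > 0 equals (B_{-s})_- = -Σ_{j=1}^{s} K_{-j} ∂^{-1} K_{-s+j-1}^T, given that (R^{-s})_- = Σ_{j=1}^{s} K_{-j} ∂^{-1} γ_{-s+j-1}^T, B₀ is local and skew-adjoint, and B₀γ_{-k} = K_{-k} for k ≥ 1. -/

import Mathlib

/-- Scalar formal pseudodifferential operators of nonlocality order `< n`. -/
def Low {F A : Type*} [CommRing F] [Ring A] (mf : F →+* A) (d e : A) (n : ℕ) :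
    AddSubgroup A :=
  AddSubgroup.closure
    ({x | ∃ (a b : F) (k : ℕ), k < n ∧ x = mf a * e ^ k * mf b} ∪
     {x | ∃ (a : F) (j : ℕ), x = mf a * d ^ j})

/-- A matrix operator has nonlocality order `< n` iff all its entries do. -/
def MLow {F A : Type*} [CommRing F] [Ring A] {N : ℕ} (mf : F →+* A) (d e : A) (n : ℕ)
    (Φ : Matrix (Fin N) (Fin N) A) : Prop :=
  ∀ i j, Φ i j ∈ Low mf d e n

/-- The weakly nonlocal rank-one term `W ∂^{-n} φ^T`. -/
def rankOne {F A : Type*} [CommRing F] [Ring A] {N : ℕ} (mf : F →+* A) (e : A) (n : ℕ)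
    (W φ : Fin N → F) : Matrix (Fin N) (Fin N) A :=
  Matrix.of fun i j => mf (W i) * e ^ n * mf (φ j)

/-- Application of a matrix operator to a column vector of functions, via the action
`act` of scalar operators on functions. -/
def appM {F A : Type*} [CommRing F] [Ring A] {N : ℕ} (act : A → F → F)
    (Φ : Matrix (Fin N) (Fin N) A) (v : Fin N → F) : Fin N → F :=
  fun i => ∑ j, act (Φ i j) (v j)

/-- Application of the formal adjoint `Φ† = (adj Φ_{ji})_{ij}` to a column vector. -/
def adjApp {F A : Type*} [CommRing F] [Ring A] {N : ℕ} (adj : A → A) (act : A → F → F)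
    (Φ : Matrix (Fin N) (Fin N) A) (v : Fin N → F) : Fin N → F :=
  fun i => ∑ j, act (adj (Φ j i)) (v j)


section Aux
variable {F A : Type*} [CommRing F] [Ring A] (mf : F →+* A) (d e : A)

lemma low_one_eq :
    Low mf d e 1 = AddSubgroup.closure {x | ∃ (a : F) (j : ℕ), x = mf a * d ^ j} := by
  unfold Low
  apply le_antisymm
  · rw [AddSubgroup.closure_le]
    rintro x (⟨a, b, k, hk, rfl⟩ | hx)
    · interval_cases k
      exact AddSubgroup.subset_closure ⟨a * b, 0, by simp [map_mul]⟩
    · exact AddSubgroup.subset_closure hx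
  · exact AddSubgroup.closure_mono Set.subset_union_right

lemma locL_mul_d {δg : F → F} (hcomm : ∀ g : F, d * mf g = mf g * d + mf (δg g))
    {x : A} (hx : x ∈ AddSubgroup.closure {x : A | ∃ (a : F) (j : ℕ), x = mf a * d ^ j}) :
    x * d ∈ AddSubgroup.closure {x : A | ∃ (a : F) (j : ℕ), x = mf a * d ^ j} := by
  induction hx using AddSubgroup.closure_induction with
  | mem y hy =>
      obtain ⟨a, j, rfl⟩ := hy
      exact AddSubgroup.subset_closure ⟨a, j + 1, by rw [pow_succ, mul_assoc]⟩
  | zero => simpa using AddSubgroup.zero_mem _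
  | add x y _ _ hx hy => simpa [add_mul] using AddSubgroup.add_mem _ hx hy
  | neg x _ hx => simpa [neg_mul] using AddSubgroup.neg_mem _ hx

lemma locL_mf_mul {a : F}
    {x : A} (hx : x ∈ AddSubgroup.closure {x : A | ∃ (a : F) (j : ℕ), x = mf a * d ^ j}) :
    mf a * x ∈ AddSubgroup.closure {x : A | ∃ (a : F) (j : ℕ), x = mf a * d ^ j} := by
  induction hx using AddSubgroup.closure_induction with
  | mem y hy =>
      obtain ⟨b, j, rfl⟩ := hy
      exact AddSubgroup.subset_closure ⟨a * b, j, by rw [map_mul, mul_assoc]⟩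
  | zero => simpa using AddSubgroup.zero_mem _
  | add x y _ _ hx hy => simpa [mul_add] using AddSubgroup.add_mem _ hx hy
  | neg x _ hx => simpa [mul_neg] using AddSubgroup.neg_mem _ hx

lemma locL_d_pow_mul_mf {δg : F → F} (hcomm : ∀ g : F, d * mf g = mf g * d + mf (δg g))
    (j : ℕ) (b : F) :
    d ^ j * mf b ∈ AddSubgroup.closure {x : A | ∃ (a : F) (j : ℕ), x = mf a * d ^ j} := by
  induction j generalizing b with
  | zero => exact AddSubgroup.subset_closure ⟨b, 0, by simp⟩
  | succ n ih =>
      have : d ^ (n + 1) * mf b = (d ^ n * mf b) * d + d ^ n * mf (δg b) := by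
        rw [pow_succ, mul_assoc, hcomm b, mul_add, ← mul_assoc]
      rw [this]
      exact AddSubgroup.add_mem _ (locL_mul_d mf d hcomm (ih b)) (ih (δg b))

lemma low_one_mul {δg : F → F} (hcomm : ∀ g : F, d * mf g = mf g * d + mf (δg g))
    {x y : A} (hx : x ∈ Low mf d e 1) (hy : y ∈ Low mf d e 1) :
    x * y ∈ Low mf d e 1 := by
  rw [low_one_eq] at hx hy ⊢
  induction hx using AddSubgroup.closure_induction with
  | mem u hu =>
      induction hy using AddSubgroup.closure_induction with
      | mem v hv =>
          obtain ⟨a, j, rfl⟩ := hu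
          obtain ⟨b, k, rfl⟩ := hv
          have h1 : mf a * d ^ j * (mf b * d ^ k)
              = mf a * ((d ^ j * mf b) * d ^ k) := by simp only [mul_assoc]
          rw [h1]
          apply locL_mf_mul
          have h2 : (d ^ j * mf b) * d ^ k ∈ AddSubgroup.closure {x : A | ∃ (a : F) (j : ℕ), x = mf a * d ^ j} := by
            clear h1
            induction k with
            | zero => simpa using locL_d_pow_mul_mf mf d hcomm j b
            | succ n ih =>
                have : d ^ j * mf b * d ^ (n + 1) = (d ^ j * mf b * d ^ n) * d := by
                  rw [pow_succ, ← mul_assoc]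
                rw [this]
                exact locL_mul_d mf d hcomm ih
          exact h2
      | zero => simpa using AddSubgroup.zero_mem _
      | add y z _ _ h1 h2 => simpa [mul_add] using AddSubgroup.add_mem _ h1 h2
      | neg y _ h1 => simpa [mul_neg] using AddSubgroup.neg_mem _ h1
  | zero => simpa using AddSubgroup.zero_mem _
  | add u v _ _ h1 h2 => simpa [add_mul] using AddSubgroup.add_mem _ h1 h2
  | neg u _ h1 => simpa [neg_mul] using AddSubgroup.neg_mem _ h1

variable {N : ℕ}

lemma MLow_add {n : ℕ} {Φ Ψ : Matrix (Fin N) (Fin N) A}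
    (hΦ : MLow mf d e n Φ) (hΨ : MLow mf d e n Ψ) : MLow mf d e n (Φ + Ψ) := fun i j => by
  simpa [Matrix.add_apply] using AddSubgroup.add_mem _ (hΦ i j) (hΨ i j)

lemma MLow_sum {n : ℕ} {ι : Type*} (t : Finset ι) (f : ι → Matrix (Fin N) (Fin N) A)
    (h : ∀ x ∈ t, MLow mf d e n (f x)) : MLow mf d e n (∑ x ∈ t, f x) := fun i j => by
  rw [Matrix.sum_apply]
  exact AddSubgroup.sum_mem _ fun x hx => h x hx i j

lemma MLow_mul {δg : F → F} (hcomm : ∀ g : F, d * mf g = mf g * d + mf (δg g))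
    {Φ Ψ : Matrix (Fin N) (Fin N) A}
    (hΦ : MLow mf d e 1 Φ) (hΨ : MLow mf d e 1 Ψ) : MLow mf d e 1 (Φ * Ψ) := fun i j => by
  rw [Matrix.mul_apply]
  exact AddSubgroup.sum_mem _ fun k _ =>
    low_one_mul mf d e hcomm (hΦ i k) (hΨ k j)

end Aux


/-- Nonlocal parts of the negative cKdV Poisson operators `B_{-s} = R^{-s} B₀`:
given `(R^{-s})_- = Σ_{j=1}^{s} K_{-j} ∂⁻¹ γ_{-s+j-1}^T`, `B₀` local and skew-adjoint
(encoded by the integration-by-parts rule modulo local terms), and `B₀ γ_{-k} = K_{-k}`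
for `k ≥ 1`, one has `(B_{-s})_- = -Σ_{j=1}^{s} K_{-j} ∂⁻¹ K_{-s+j-1}^T` for `s > 0`.
Below `Km k` stands for `K_{-k}` and `γm k` for `γ_{-k}` (`k ≥ 1`), so that the terms read
`K_{-j} ∂⁻¹ γ_{-(s-j+1)}^T` resp. `K_{-j} ∂⁻¹ K_{-(s-j+1)}^T`. -/

theorem cKdV_negative_Poisson_nonlocal_parts {F A : Type*} [CommRing F] [Ring A]
    {N : ℕ} (mf : F →+* A) (δ : F → F) (d e : A) (act : A → F → F)
    (hde : d * e = 1) (hed : e * d = 1)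
    (hcomm : ∀ g : F, d * mf g = mf g * d + mf (δ g))
    (hactmul : ∀ (x y : A) (g : F), act (x * y) g = act x (act y g))
    (hactm : ∀ g h : F, act (mf g) h = g * h)
    (hactd : ∀ g : F, act d g = δ g)
    (Km : ℕ → Fin N → F) (γm : ℕ → Fin N → F)
    (B₀ Rinv : Matrix (Fin N) (Fin N) A)
    (Bneg : ℕ → Matrix (Fin N) (Fin N) A)
    (hBneg : ∀ s : ℕ, Bneg s = Rinv ^ s * B₀)
    (hB0loc : MLow mf d e 1 B₀)
    (hIBP : ∀ W γv : Fin N → F,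
      MLow mf d e 1 (rankOne mf e 1 W γv * B₀ + rankOne mf e 1 W (appM act B₀ γv)))
    (hRs : ∀ s : ℕ, 1 ≤ s → MLow mf d e 1 (Rinv ^ s -
      ∑ j ∈ Finset.Icc 1 s, rankOne mf e 1 (Km j) (γm (s - j + 1))))
    (hKrel : ∀ k : ℕ, 1 ≤ k → appM act B₀ (γm k) = Km k) :
    ∀ s : ℕ, 1 ≤ s → MLow mf d e 1 (Bneg s +
      ∑ j ∈ Finset.Icc 1 s, rankOne mf e 1 (Km j) (Km (s - j + 1))) := by
  intro s hs
  have hfact : Bneg s + ∑ j ∈ Finset.Icc 1 s, rankOne mf e 1 (Km j) (Km (s - j + 1))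
      = (Rinv ^ s - ∑ j ∈ Finset.Icc 1 s, rankOne mf e 1 (Km j) (γm (s - j + 1))) * B₀
        + ∑ j ∈ Finset.Icc 1 s,
            (rankOne mf e 1 (Km j) (γm (s - j + 1)) * B₀
              + rankOne mf e 1 (Km j) (Km (s - j + 1))) := by
    rw [hBneg, sub_mul, Finset.sum_mul, Finset.sum_add_distrib]
    abel
  rw [hfact]
  apply MLow_add
  · exact MLow_mul mf d e hcomm (hRs s hs) hB0loc
  · apply MLow_sum
    intro j hj
    have hk : 1 ≤ s - j + 1 := by omega
    rw [← hKrel (s - j + 1) hk]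
    exact hIBP (Km j) (γm (s - j + 1))
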